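/- arXiv:2010.15451 — 2 statements merged into one kernel-verified Lean document; each statement's English description precedes it below -/
import Mathlib

section
/- Let 1 < p < ∞ and let (g_j) be a sequence in an L^p space with ‖g_j‖ ≍ 1 uniformly, such that g_j → φ in norm with ‖φ‖ > 0 and ‖φ − g_j‖ ≤ 2^{−j}. If (a_j) is a nonnegative sequence with (a_j) ∈ ℓ^{p'} but Σ a_j = ∞ (p' the conjugate exponent), then Σ_j a_j g_j cannot converge in L^p whenever the g_j have pairwise disjoint supports; more precisely, the partial sums of Σ_j a_j φ diverge pointwise on a set of positive measure while Σ_j a_j (φ − g_j) converges absolutely in L^p norm. -/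
open MeasureTheory Metric Set Filter
open scoped ENNReal NNReal Topology

noncomputable section

/-- The functional-analytic core of the compactness contradiction: if (g_j) are
disjointly supported, normalized in L^p, converge to φ ≠ 0 with ‖φ - g_j‖ ≤ 2^(-j),
and (a_j) is a nonnegative ℓ^(p') sequence with Σ a_j = ∞, then Σ a_j (φ - g_j)
converges absolutely in L^p norm, while Σ a_j φ(x) diverges on a set of positive
measure. -/
theorem disjoint_supports_divergence {α : Type*} [MeasurableSpace α] (μ : Measure α)
    (p : ℝ) (hp : 1 < p) (g : ℕ → α → ℝ) (φ : α → ℝ) (a : ℕ → ℝ) (c₁ c₂ : ℝ)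
    (hg : ∀ j, MemLp (g j) (ENNReal.ofReal p) μ)
    (hφ : MemLp φ (ENNReal.ofReal p) μ)
    (hc₁ : 0 < c₁)
    (hlow : ∀ j, ENNReal.ofReal c₁ ≤ eLpNorm (g j) (ENNReal.ofReal p) μ)
    (hup : ∀ j, eLpNorm (g j) (ENNReal.ofReal p) μ ≤ ENNReal.ofReal c₂)
    (hφpos : 0 < eLpNorm φ (ENNReal.ofReal p) μ)
    (hclose : ∀ j, eLpNorm (fun x => φ x - g j x) (ENNReal.ofReal p) μ
      ≤ ENNReal.ofReal (2 ^ (-(j : ℝ))))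
    (hdisj : Pairwise fun i j => ∀ᵐ x ∂μ, g i x = 0 ∨ g j x = 0)
    (ha : ∀ j, 0 ≤ a j)
    (hap : Summable fun j => a j ^ (p / (p - 1)))
    (hasum : ¬ Summable a) :
    (Summable fun j =>
      a j * (eLpNorm (fun x => φ x - g j x) (ENNReal.ofReal p) μ).toReal) ∧
    0 < μ {x | ¬ Summable fun j => a j * φ x} := by
  have hp'1 : 1 < p / (p - 1) := by
    rw [lt_div_iff₀ (by linarith)]; linarith
  have hgeo : Summable fun j : ℕ => (2:ℝ) ^ (-(j:ℝ)) := by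
    have h : ∀ j : ℕ, (2:ℝ) ^ (-(j:ℝ)) = (1/2:ℝ) ^ j := by
      intro j
      rw [Real.rpow_neg (by norm_num), Real.rpow_natCast, one_div, inv_pow]
    simp_rw [h]
    exact summable_geometric_of_lt_one (by norm_num) (by norm_num)
  have hbound : ∀ j : ℕ,
      a j * (eLpNorm (fun x => φ x - g j x) (ENNReal.ofReal p) μ).toReal
        ≤ (2:ℝ) ^ (-(j:ℝ)) + a j ^ (p / (p - 1)) := by
    intro j
    have h2 : (0:ℝ) < 2 ^ (-(j:ℝ)) := Real.rpow_pos_of_pos two_pos _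
    have h2le : (2:ℝ) ^ (-(j:ℝ)) ≤ 1 :=
      Real.rpow_le_one_of_one_le_of_nonpos (by norm_num) (by simp)
    have ht : (eLpNorm (fun x => φ x - g j x) (ENNReal.ofReal p) μ).toReal
        ≤ 2 ^ (-(j:ℝ)) := ENNReal.toReal_le_of_le_ofReal h2.le (hclose j)
    have h1 : a j * (eLpNorm (fun x => φ x - g j x) (ENNReal.ofReal p) μ).toReal
        ≤ a j * 2 ^ (-(j:ℝ)) := mul_le_mul_of_nonneg_left ht (ha j)
    have hap' : 0 ≤ a j ^ (p / (p - 1)) := Real.rpow_nonneg (ha j) _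
    rcases le_or_gt (a j) 1 with h | h
    · have : a j * 2 ^ (-(j:ℝ)) ≤ 2 ^ (-(j:ℝ)) := by
        nlinarith [ha j]
      linarith
    · have hle : a j ≤ a j ^ (p / (p - 1)) := by
        calc a j = a j ^ (1:ℝ) := (Real.rpow_one _).symm
        _ ≤ a j ^ (p / (p - 1)) :=
          Real.rpow_le_rpow_of_exponent_le h.le hp'1.le
      have : a j * 2 ^ (-(j:ℝ)) ≤ a j ^ (p / (p - 1)) := by
        nlinarith
      linarith
  constructor
  · exact Summable.of_nonneg_of_le
      (fun j => mul_nonneg (ha j) ENNReal.toReal_nonneg) hbound (hgeo.add hap)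
  · have hsub : {x | φ x ≠ 0} ⊆ {x | ¬ Summable fun j => a j * φ x} := by
      intro x hx hs
      exact hasum (by simpa [mul_inv_cancel_right₀ hx] using hs.mul_right (φ x)⁻¹)
    have hne : μ {x | φ x ≠ 0} ≠ 0 := by
      intro h0
      have hae : φ =ᵐ[μ] 0 := by
        rw [Filter.EventuallyEq, ae_iff]
        simpa using h0
      have := eLpNorm_congr_ae (μ := μ) (p := ENNReal.ofReal p) hae
      rw [eLpNorm_zero] at this
      exact absurd this hφpos.ne'
    calc (0:ℝ≥0∞) < μ {x | φ x ≠ 0} := pos_iff_ne_zero.mpr hne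
    _ ≤ μ {x | ¬ Summable fun j => a j * φ x} := measure_mono hsub
end
end

section
/- If T is a Calderón–Zygmund operator on ℝᵈ whose kernel K satisfies the non-degeneracy condition (there exist c₀, C₀ > 0 such that for every x and r > 0, there is y with r ≤ |x−y| ≤ C₀ r and |K(x,y)| ≥ 1/(c₀ rᵈ)), then there exist constants 3 ≤ A₁ ≤ A₂ such that for every ball B = B(x₀, r) there is a ball B̃ = B(y₀, r) with A₁ r ≤ |x₀ − y₀| ≤ A₂ r, on which K(x,y) does not change sign for (x,y) ∈ B × B̃ and satisfies |K(x,y)| ≳ r^{−d} there. -/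
open MeasureTheory Metric Set Filter
open scoped ENNReal NNReal Topology

noncomputable section

abbrev Ed (d : ℕ) := EuclideanSpace ℝ (Fin d)

/-- A weight: a.e. positive and locally integrable. -/
def IsWeight {d : ℕ} (ν : Ed d → ℝ) : Prop :=
  (∀ᵐ x, 0 < ν x) ∧ LocallyIntegrable ν

/-- The Muckenhoupt A_p condition over balls. -/
def IsAp {d : ℕ} (p : ℝ) (w : Ed d → ℝ) : Prop :=
  IsWeight w ∧ ∃ C : ℝ, ∀ (x : Ed d) (r : ℝ), 0 < r →
    (⨍ y in ball x r, w y) *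
      (⨍ y in ball x r, w y ^ (-(1 / (p - 1)))) ^ (p - 1) ≤ C

/-- Weighted mean oscillation of b over a set B: (1/ν(B)) ∫_B |b - b_B|. -/
def oscW {d : ℕ} (ν b : Ed d → ℝ) (B : Set (Ed d)) : ℝ :=
  (∫ x in B, |b x - ⨍ y in B, b y|) / (∫ x in B, ν x)

/-- The ν-weighted BMO condition. -/
def MemBMOW {d : ℕ} (ν b : Ed d → ℝ) : Prop :=
  LocallyIntegrable b ∧ ∃ C : ℝ, ∀ (x : Ed d) (r : ℝ), 0 < r → oscW ν b (ball x r) ≤ C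

/-- The ν-weighted VMO condition: BMO plus vanishing normalized oscillation at small
scales, at large scales, and at infinity. -/
def MemVMOW {d : ℕ} (ν b : Ed d → ℝ) : Prop :=
  MemBMOW ν b ∧
  (∀ ε > (0:ℝ), ∃ a > (0:ℝ), ∀ (x : Ed d) (r : ℝ), 0 < r → r ≤ a →
    oscW ν b (ball x r) ≤ ε) ∧
  (∀ ε > (0:ℝ), ∃ a > (0:ℝ), ∀ (x : Ed d) (r : ℝ), a ≤ r →
    oscW ν b (ball x r) ≤ ε) ∧
  (∀ ε > (0:ℝ), ∃ a > (0:ℝ), ∀ (x : Ed d) (r : ℝ), 0 < r →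
    Disjoint (ball x r) (ball (0 : Ed d) a) → oscW ν b (ball x r) ≤ ε)

/-- The size and δ-Hölder smoothness conditions for a standard CZ kernel. -/
def IsStandardKernel {d : ℕ} (K : Ed d → Ed d → ℝ) (CK δ : ℝ) : Prop :=
  0 < δ ∧ δ ≤ 1 ∧
  (∀ x y, x ≠ y → |K x y| ≤ CK / dist x y ^ d) ∧
  (∀ x y h : Ed d, 0 < ‖h‖ → 2 * ‖h‖ < dist x y →
    |K (x + h) y - K x y| + |K x (y + h) - K x y|
      ≤ CK * ‖h‖ ^ δ / dist x y ^ ((d : ℝ) + δ))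

/-- The non-degeneracy condition on a kernel. -/
def IsNonDegenerate {d : ℕ} (K : Ed d → Ed d → ℝ) (c₀ C₀ : ℝ) : Prop :=
  0 < c₀ ∧ 0 < C₀ ∧ ∀ (x : Ed d) (r : ℝ), 0 < r →
    ∃ y : Ed d, r ≤ dist x y ∧ dist x y ≤ C₀ * r ∧ 1 / (c₀ * r ^ d) ≤ |K x y|

/-- T is an L²-bounded operator with kernel K off the support. -/
def IsCZOperator {d : ℕ} (T : (Ed d → ℝ) → (Ed d → ℝ)) (K : Ed d → Ed d → ℝ) : Prop :=
  (∀ (f g : Ed d → ℝ) (α β : ℝ),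
    T (fun x => α * f x + β * g x) = fun x => α * T f x + β * T g x) ∧
  (∃ C : ℝ, ∀ f : Ed d → ℝ, MemLp f 2 volume →
    eLpNorm (T f) 2 volume ≤ ENNReal.ofReal C * eLpNorm f 2 volume) ∧
  (∀ f : Ed d → ℝ, Integrable f → HasCompactSupport f → ∀ x ∉ tsupport f,
    T f x = ∫ y, K x y * f y)

/-- The measure with density w with respect to Lebesgue measure, i.e. L^p(w). -/
def wMeasure {d : ℕ} (w : Ed d → ℝ) : Measure (Ed d) :=
  volume.withDensity fun x => ENNReal.ofReal (w x)

/-- The bComm [b,T] f = b · Tf − T(bf). -/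
def bComm {d : ℕ} (b : Ed d → ℝ) (T : (Ed d → ℝ) → (Ed d → ℝ))
    (f : Ed d → ℝ) : Ed d → ℝ :=
  fun x => b x * T f x - T (fun y => b y * f y) x

/-- Sequential compactness of the bComm [b,T] from L^p(σ) to L^p(λ): every
bounded sequence in L^p(σ) has a subsequence whose images are Cauchy in L^p(λ). -/
def CompactCommutator {d : ℕ} (b : Ed d → ℝ) (T : (Ed d → ℝ) → (Ed d → ℝ))
    (p : ℝ) (σw lw : Ed d → ℝ) : Prop :=
  ∀ f : ℕ → Ed d → ℝ,
    (∀ n, MemLp (f n) (ENNReal.ofReal p) (wMeasure σw)) →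
    (∀ n, eLpNorm (f n) (ENNReal.ofReal p) (wMeasure σw) ≤ 1) →
    ∃ φ : ℕ → ℕ, StrictMono φ ∧ ∀ ε > (0:ℝ), ∃ N : ℕ, ∀ m ≥ N, ∀ n ≥ N,
      eLpNorm (fun x => bComm b T (f (φ m)) x - bComm b T (f (φ n)) x)
        (ENNReal.ofReal p) (wMeasure lw) ≤ ENNReal.ofReal ε
set_option maxHeartbeats 1600000 in
/-- A non-degenerate CZ kernel admits, for every ball B(x₀,r), a companion ball
B(y₀,r) at distance ≍ r on which K has constant sign and size ≳ r^(−d). -/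
theorem nondegenerate_companion_ball {d : ℕ} (hd : 0 < d)
    (T : (Ed d → ℝ) → (Ed d → ℝ)) (K : Ed d → Ed d → ℝ) (CK δ c₀ C₀ : ℝ)
    (hT : IsCZOperator T K) (hK : IsStandardKernel K CK δ)
    (hnd : IsNonDegenerate K c₀ C₀) :
    ∃ A₁ A₂ : ℝ, 3 ≤ A₁ ∧ A₁ ≤ A₂ ∧ ∃ c > (0:ℝ),
      ∀ (x₀ : Ed d) (r : ℝ), 0 < r → ∃ y₀ : Ed d,
        A₁ * r ≤ dist x₀ y₀ ∧ dist x₀ y₀ ≤ A₂ * r ∧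
        ((∀ x ∈ ball x₀ r, ∀ y ∈ ball y₀ r, c / r ^ d ≤ K x y) ∨
         (∀ x ∈ ball x₀ r, ∀ y ∈ ball y₀ r, K x y ≤ -(c / r ^ d))) := by
  obtain ⟨hδ, hδ1, hsize, hsmooth⟩ := hK
  obtain ⟨hc₀, hC₀, hnd'⟩ := hnd
  set CK' : ℝ := max CK 1 with hCK'def
  have hCK1 : (1:ℝ) ≤ CK' := le_max_right _ _
  have hCKle : CK ≤ CK' := le_max_left _ _
  have hCKpos : (0:ℝ) < CK' := lt_of_lt_of_le one_pos hCK1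
  have hAex : ∃ A : ℝ, 3 ≤ A ∧ 2^(d+2) * c₀ * CK' ≤ (A/2) ^ δ := by
    set N : ℝ := 2^(d+2) * c₀ * CK' with hNdef
    have hNpos : 0 < N := by rw [hNdef]; positivity
    refine ⟨max 3 ((2*N) ^ (1/δ)), le_max_left _ _, ?_⟩
    have hApos : (0:ℝ) < max 3 ((2*N) ^ (1/δ)) :=
      lt_of_lt_of_le (by norm_num) (le_max_left _ _)
    have h1 : 2*N ≤ (max 3 ((2*N) ^ (1/δ))) ^ δ := by
      calc 2*N = ((2*N)^(1/δ))^δ := by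
            rw [← Real.rpow_mul (by positivity), one_div, inv_mul_cancel₀ hδ.ne',
              Real.rpow_one]
        _ ≤ _ := Real.rpow_le_rpow (by positivity) (le_max_right _ _) hδ.le
    have h2 : (2:ℝ)^δ ≤ 2 := by
      calc (2:ℝ)^δ ≤ (2:ℝ)^(1:ℝ) := Real.rpow_le_rpow_of_exponent_le one_le_two hδ1
        _ = 2 := Real.rpow_one 2
    have h3 : ((max 3 ((2*N) ^ (1/δ)))/2)^δ
        = (max 3 ((2*N) ^ (1/δ)))^δ / 2^δ := Real.div_rpow hApos.le (by norm_num) δ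
    have h4 : (0:ℝ) < (2:ℝ)^δ := Real.rpow_pos_of_pos two_pos δ
    rw [h3, le_div_iff₀ h4]
    nlinarith
  obtain ⟨A, hA3, hAδ⟩ := hAex
  have hApos : (0:ℝ) < A := by linarith
  refine ⟨A, A * max C₀ 1, hA3, le_mul_of_one_le_right hApos.le (le_max_right _ _),
    1/(2*c₀*A^d), by positivity, ?_⟩
  intro x₀ r hr
  obtain ⟨y, hy1, hy2, hy3⟩ := hnd' x₀ (A*r) (by positivity)
  have hy2' : dist x₀ y ≤ A * max C₀ 1 * r := by
    calc dist x₀ y ≤ C₀ * (A*r) := hy2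
      _ ≤ max C₀ 1 * (A*r) := mul_le_mul_of_nonneg_right (le_max_left _ _) (by positivity)
      _ = A * max C₀ 1 * r := by ring
  set ε : ℝ := 1/(2*c₀*(A*r)^d) with hεdef
  have hεpos : 0 < ε := by rw [hεdef]; positivity
  set e : ℝ := (d:ℝ) + δ with hedef
  have hepos : (0:ℝ) < e := by rw [hedef]; positivity
  set B : ℝ := (A/2)*r with hBdef
  have hBpos : 0 < B := by rw [hBdef]; positivity
  have hBe : B ^ e = (A*r)^d / 2^d * ((A/2)^δ * r^δ) := by
    rw [hedef, Real.rpow_add hBpos, Real.rpow_natCast, hBdef,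
      Real.mul_rpow (by positivity) hr.le]
    congr 1
    rw [show (A/2)*r = (A*r)/2 by ring, div_pow]
  have h3rA : 3 * r ≤ A * r := mul_le_mul_of_nonneg_right hA3 hr.le
  have hArd : (0:ℝ) < (A*r)^d := by positivity
  have hrδ : (0:ℝ) < r ^ δ := Real.rpow_pos_of_pos hr δ
  have hbound : 2*CK'*(r^δ) / B^e ≤ ε := by
    rw [hBe, hεdef, div_le_div_iff₀ (by positivity) (by positivity)]
    have h2d2 : (2:ℝ)^(d+2) = 4 * 2^d := by rw [pow_add]; ring
    have hkey2 : 4 * c₀ * CK' * 2^d ≤ (A/2)^δ := by rw [h2d2] at hAδ; linarith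
    have h8 : 4*c₀*CK' ≤ (A/2)^δ/2^d := by
      rw [le_div_iff₀ (by positivity : (0:ℝ) < (2:ℝ)^d)]; linarith
    have h9 := mul_le_mul_of_nonneg_left h8 (mul_pos hArd hrδ).le
    have h10 : (A*r)^d * r^δ * ((A/2)^δ / 2^d) = 1 * ((A*r)^d / 2^d * ((A/2)^δ * r^δ)) := by
      ring
    have h11 : (A*r)^d * r^δ * (4*c₀*CK') = 2*CK'*r^δ * (2*c₀*(A*r)^d) := by ring
    linarith
  -- key oscillation estimate
  have key : ∀ x ∈ ball x₀ r, ∀ y' ∈ ball y r, |K x y' - K x₀ y| ≤ ε := by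
    intro x hx y' hy'
    rw [mem_ball] at hx hy'
    have ht := dist_triangle x₀ x y
    have hxx : dist x₀ x < r := by rw [dist_comm]; exact hx
    have hd1 : 2*r ≤ dist x y := by linarith
    have hd2 : B ≤ dist x y := by
      have h0 : (0:ℝ) ≤ (A/2 - 1) * r := mul_nonneg (by linarith) hr.le
      rw [hBdef]; nlinarith
    have term2 : |K x y' - K x y| ≤ CK' * r^δ / B^e := by
      by_cases hyy : y' = y
      · subst hyy
        simp only [sub_self, abs_zero]
        positivity
      · have hh : (0:ℝ) < ‖y' - y‖ := norm_pos_iff.mpr (sub_ne_zero.mpr hyy)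
        have hhr : ‖y' - y‖ < r := by rw [← dist_eq_norm]; exact hy'
        have hlt : 2*‖y' - y‖ < dist x y := by linarith
        have h2 : |K x (y + (y' - y)) - K x y| ≤ CK * ‖y' - y‖^δ / dist x y ^ e :=
          le_trans (le_add_of_nonneg_left (abs_nonneg _)) (hsmooth x y (y' - y) hh hlt)
        rw [show y + (y' - y) = y' by abel] at h2
        have hde : B ^ e ≤ dist x y ^ e := Real.rpow_le_rpow hBpos.le hd2 hepos.le
        refine h2.trans (div_le_div₀ (by positivity) ?_ (Real.rpow_pos_of_pos hBpos e) hde)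
        have h5 : CK * ‖y' - y‖^δ ≤ CK' * ‖y' - y‖^δ :=
          mul_le_mul_of_nonneg_right hCKle (by positivity)
        have h6 : CK' * ‖y' - y‖^δ ≤ CK' * r^δ :=
          mul_le_mul_of_nonneg_left (Real.rpow_le_rpow hh.le hhr.le hδ.le) hCKpos.le
        linarith
    have term1 : |K x y - K x₀ y| ≤ CK' * r^δ / B^e := by
      by_cases hxeq : x = x₀
      · subst hxeq
        simp only [sub_self, abs_zero]
        positivity
      · have hh : (0:ℝ) < ‖x - x₀‖ := norm_pos_iff.mpr (sub_ne_zero.mpr hxeq)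
        have hhr : ‖x - x₀‖ < r := by rw [← dist_eq_norm]; exact hx
        have hlt : 2*‖x - x₀‖ < dist x₀ y := by linarith
        have h2 : |K (x₀ + (x - x₀)) y - K x₀ y| ≤ CK * ‖x - x₀‖^δ / dist x₀ y ^ e :=
          le_trans (le_add_of_nonneg_right (abs_nonneg _)) (hsmooth x₀ y (x - x₀) hh hlt)
        rw [show x₀ + (x - x₀) = x by abel] at h2
        have hde : B ^ e ≤ dist x₀ y ^ e := by
          refine Real.rpow_le_rpow hBpos.le ?_ hepos.le
          have h0 : (0:ℝ) ≤ (A/2) * r := by positivity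
          rw [hBdef]; linarith
        refine h2.trans (div_le_div₀ (by positivity) ?_ (Real.rpow_pos_of_pos hBpos e) hde)
        have h5 : CK * ‖x - x₀‖^δ ≤ CK' * ‖x - x₀‖^δ :=
          mul_le_mul_of_nonneg_right hCKle (by positivity)
        have h6 : CK' * ‖x - x₀‖^δ ≤ CK' * r^δ :=
          mul_le_mul_of_nonneg_left (Real.rpow_le_rpow hh.le hhr.le hδ.le) hCKpos.le
        linarith
    calc |K x y' - K x₀ y| ≤ |K x y' - K x y| + |K x y - K x₀ y| :=
          abs_sub_le (K x y') (K x y) (K x₀ y)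
      _ ≤ CK' * r^δ / B^e + CK' * r^δ / B^e := add_le_add term2 term1
      _ = 2*CK'*(r^δ) / B^e := by ring
      _ ≤ ε := hbound
  have h2ε : 1/(c₀*(A*r)^d) = 2*ε := by
    rw [hεdef]
    field_simp
  have hεc : 1/(2*c₀*A^d) / r^d = ε := by
    rw [hεdef, mul_pow]
    field_simp
  refine ⟨y, hy1, hy2', ?_⟩
  rcases le_or_gt 0 (K x₀ y) with hpos | hneg
  · left
    intro x hx y' hy'
    have hk := (abs_le.mp (key x hx y' hy')).1
    have habs : 2*ε ≤ K x₀ y := by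
      rw [← h2ε]; rwa [abs_of_nonneg hpos] at hy3
    rw [hεc]
    linarith
  · right
    intro x hx y' hy'
    have hk := (abs_le.mp (key x hx y' hy')).2
    have habs : K x₀ y ≤ -(2*ε) := by
      rw [abs_of_neg hneg] at hy3
      linarith [h2ε]
    rw [hεc]
    linarith
end
end
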